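/- Every trajectory of the Chialvo map starting in the region B̂ = {(x,y) : x ≥ k, y > v̂} leaves B̂ after a finite number of iterations: for every (x,y) ∈ B̂ there exists n ≥ 1 such that fⁿ(x,y) ∉ B̂. -/
import Mathlib


/-- Every trajectory starting in region `B̂ = {x ≥ k, y > v̂}` leaves `B̂`
after a finite number of iterations. -/
theorem chialvo_escape_B
    (a b c k : ℝ)
    (ha : a ∈ Set.Ioo (0:ℝ) 1) (hb : b ∈ Set.Ioo (0:ℝ) 1)
    (hc : c ∈ Set.Ioo (0:ℝ) 1) (hk : 0 < k)
    (f : ℝ × ℝ → ℝ × ℝ)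
    (hf : ∀ p : ℝ × ℝ,
      f p = (p.1 ^ 2 * Real.exp (p.2 - p.1) + k, a * p.2 - b * p.1 + c))
    (v : ℝ) (hv : v = (c - b * k) / (1 - a))
    (B : Set (ℝ × ℝ)) (hB : B = {p : ℝ × ℝ | p.1 ≥ k ∧ p.2 > v}) :
    ∀ p ∈ B, ∃ n : ℕ, n ≥ 1 ∧ f^[n] p ∉ B := by
  obtain ⟨ha0, ha1⟩ := ha
  obtain ⟨hb0, hb1⟩ := hb
  subst hB
  intro p hp
  by_contra hcon
  push_neg at hcon
  have hone : (0:ℝ) < 1 - a := by linarith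
  have hvfix : a * v - b * k + c = v := by
    rw [hv]; field_simp; ring
  -- all iterates stay in B
  have hmem : ∀ n : ℕ, k ≤ (f^[n] p).1 ∧ v < (f^[n] p).2 := by
    intro n
    rcases Nat.eq_zero_or_pos n with h | h
    · subst h; simpa using hp
    · exact hcon n h
  -- recurrences
  have hrecY : ∀ n : ℕ, (f^[n+1] p).2 - v
      = a * ((f^[n] p).2 - v) - b * ((f^[n] p).1 - k) := by
    intro n
    rw [Function.iterate_succ_apply', hf]
    simp only
    linarith [hvfix]
  have hrecX : ∀ n : ℕ, (f^[n+1] p).1 - k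
      = (f^[n] p).1 ^ 2 * Real.exp ((f^[n] p).2 - (f^[n] p).1) := by
    intro n
    rw [Function.iterate_succ_apply', hf]
    simp only
    ring
  -- geometric decay of y - v
  have hE : ∀ n : ℕ, (f^[n] p).2 - v ≤ a ^ n * (p.2 - v) := by
    intro n
    induction n with
    | zero => simp
    | succ m ih =>
      have hm := hmem m
      have h1 : a * ((f^[m] p).2 - v) ≤ a * (a ^ m * (p.2 - v)) :=
        mul_le_mul_of_nonneg_left ih ha0.le
      have h2 : 0 ≤ b * ((f^[m] p).1 - k) := by nlinarith [hm.1]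
      calc (f^[m+1] p).2 - v
          = a * ((f^[m] p).2 - v) - b * ((f^[m] p).1 - k) := hrecY m
        _ ≤ a * (a ^ m * (p.2 - v)) := by linarith
        _ = a ^ (m+1) * (p.2 - v) := by ring
  -- x - k is dominated by y - v
  have hD : ∀ n : ℕ, b * ((f^[n] p).1 - k) < a * ((f^[n] p).2 - v) := by
    intro n
    have h := (hmem (n+1)).2
    have h2 := hrecY n
    linarith
  have hE0 : 0 < p.2 - v := by
    have := (hmem 0).2
    simpa using this
  have hpow1 : ∀ n : ℕ, a ^ n ≤ 1 := fun n => pow_le_one₀ ha0.le ha1.le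
  -- uniform bound on x along the trajectory
  have hXub : ∀ n : ℕ, (f^[n] p).1 - k ≤ (a / b) * (p.2 - v) := by
    intro n
    have h1 := hD n
    have h2 := hE n
    have h3 : a * ((f^[n] p).2 - v) ≤ a * (a ^ n * (p.2 - v)) :=
      mul_le_mul_of_nonneg_left h2 ha0.le
    have h4 : a ^ n * (p.2 - v) ≤ 1 * (p.2 - v) :=
      mul_le_mul_of_nonneg_right (hpow1 n) hE0.le
    have h5 : b * ((f^[n] p).1 - k) ≤ b * ((a / b) * (p.2 - v)) := by
      have : b * ((a / b) * (p.2 - v)) = a * (p.2 - v) := by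
        field_simp
      nlinarith
    exact le_of_mul_le_mul_left h5 hb0
  -- the lower bound constant
  set C : ℝ := k ^ 2 * Real.exp (v - k - (a / b) * (p.2 - v)) with hCdef
  have hCpos : 0 < C := by positivity
  have hClow : ∀ n : ℕ, C ≤ (f^[n+1] p).1 - k := by
    intro n
    have hm := hmem n
    have hx : k ^ 2 ≤ (f^[n] p).1 ^ 2 := by nlinarith [hm.1]
    have harg : v - k - (a / b) * (p.2 - v) ≤ (f^[n] p).2 - (f^[n] p).1 := by
      have := hXub n
      have := hm.2
      linarith
    have hexp : Real.exp (v - k - (a / b) * (p.2 - v))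
        ≤ Real.exp ((f^[n] p).2 - (f^[n] p).1) := Real.exp_le_exp.mpr harg
    calc C = k ^ 2 * Real.exp (v - k - (a / b) * (p.2 - v)) := hCdef
      _ ≤ (f^[n] p).1 ^ 2 * Real.exp ((f^[n] p).2 - (f^[n] p).1) := by
          apply mul_le_mul hx hexp (Real.exp_pos _).le (by nlinarith [hm.1])
      _ = (f^[n+1] p).1 - k := (hrecX n).symm
  -- choose n large enough
  obtain ⟨N, hN⟩ := exists_pow_lt_of_lt_one
    (show (0:ℝ) < C * b / (a * (p.2 - v)) by positivity) ha1
  have h4 : a ^ N * (a * (p.2 - v)) < C * b :=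
    (lt_div_iff₀ (by positivity)).mp hN
  have h1 := hClow N
  have h2 := hD (N+1)
  have h3 := hE (N+1)
  have e1 : a * ((f^[N+1] p).2 - v) ≤ a * (a ^ (N+1) * (p.2 - v)) :=
    mul_le_mul_of_nonneg_left h3 ha0.le
  have e2 : a * (a ^ (N+1) * (p.2 - v)) = a ^ N * (a * (p.2 - v)) * a := by
    ring
  have e3 : a ^ N * (a * (p.2 - v)) * a ≤ a ^ N * (a * (p.2 - v)) * 1 := by
    apply mul_le_mul_of_nonneg_left ha1.le (by positivity)
  nlinarith [hCpos, hb0]
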